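/- Weak conjunction of iterated atomic steps: a^ω ⋓ b^ω = (a ⋓ b)^ω for atomic steps a and b. -/
import Mathlib


/-- A Concurrent Refinement Algebra over a complete distributive lattice of
commands, ordered by refinement (`⊓` = nondeterministic choice, `⊥` = abort,
`⊤` = magic), with sequential composition `seq` (identity `nil`),
synchronous parallel `par`, weak conjunction `conj`, a Boolean-style
sub-lattice of atomic steps `Atomic` (with `eps` the environment-step identity
of `par`) and a sub-lattice of tests `Test`. -/
structure CRA (C : Type*) [CompleteDistribLattice C] where
  seq : C → C → C
  par : C → C → C
  conj : C → C → C
  nil : C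
  eps : C
  Atomic : C → Prop
  Test : C → Prop
  seq_assoc : ∀ a b c, seq (seq a b) c = seq a (seq b c)
  seq_nil : ∀ c, seq c nil = c
  nil_seq : ∀ c, seq nil c = c
  seq_mono_left : ∀ d : C, Monotone fun c => seq c d
  seq_mono_right : ∀ c : C, Monotone (seq c)
  top_seq : ∀ c, seq ⊤ c = ⊤
  bot_seq : ∀ c, seq ⊥ c = ⊥
  /-- sequential composition distributes over arbitrary choices on the right -/
  seq_sInf_distrib : ∀ (S : Set C) (d : C), seq (sInf S) d = ⨅ c ∈ S, seq c d
  par_assoc : ∀ a b c, par (par a b) c = par a (par b c)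
  par_comm : ∀ a b, par a b = par b a
  /-- parallel distributes over arbitrary choices -/
  par_sInf_distrib : ∀ (c : C) (S : Set C), par c (sInf S) = ⨅ d ∈ S, par c d
  nil_par_nil : par nil nil = nil
  atomic_par : ∀ a b, Atomic a → Atomic b → Atomic (par a b)
  /-- synchronous interchange law for atomic steps -/
  interchange : ∀ a b c d, Atomic a → Atomic b →
    par (seq a c) (seq b d) = seq (par a b) (par c d)
  par_atomic_seq_nil : ∀ a c, Atomic a → par (seq a c) nil = ⊤
  atomic_eps : Atomic eps
  /-- `eps` is the identity of parallel on atomic steps -/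
  eps_par_atomic : ∀ a, Atomic a → par eps a = a
  conj_assoc : ∀ a b c, conj (conj a b) c = conj a (conj b c)
  conj_comm : ∀ a b, conj a b = conj b a
  conj_idem : ∀ a, conj a a = a
  conj_bot : ∀ c, conj c ⊥ = ⊥
  conj_atomic : ∀ a b, Atomic a → Atomic b → conj a b = a ⊔ b
  conj_test : ∀ t t', Test t → Test t' → conj t t' = t ⊔ t'
  conj_interchange : ∀ a b c d, Atomic a → Atomic b →
    conj (seq a c) (seq b d) = seq (conj a b) (conj c d)
  conj_atomic_seq_nil : ∀ a c, Atomic a → conj (seq a c) nil = ⊤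
  conj_sInf_distrib : ∀ (c : C) (S : Set C), S.Nonempty →
    conj c (sInf S) = ⨅ d ∈ S, conj c d
  atomic_conj : ∀ a b, Atomic a → Atomic b → Atomic (conj a b)
  test_nil : Test nil
  test_nil_le : ∀ t, Test t → nil ≤ t
  test_seq_par_interchange : ∀ t t' c d, Test t → Test t' →
    par (seq t c) (seq t' d) = seq (t ⊔ t') (par c d)
  conj_test_interchange : ∀ t t' c d, Test t → Test t' →
    conj (seq t c) (seq t' d) = seq (t ⊔ t') (conj c d)

namespace CRA

variable {C : Type*} [CompleteDistribLattice C] (A : CRA C)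

/-- possibly infinite iteration `c^ω = μ x. nil ⊓ c;x` -/
def omega (c : C) : C :=
  OrderHom.lfp ⟨fun x => A.nil ⊓ A.seq c x,
    fun _ _ h => inf_le_inf_left _ (A.seq_mono_right c h)⟩

/-- finite iteration `c^* = ν x. nil ⊓ c;x` -/
def star (c : C) : C :=
  OrderHom.gfp ⟨fun x => A.nil ⊓ A.seq c x,
    fun _ _ h => inf_le_inf_left _ (A.seq_mono_right c h)⟩

/-- infinite iteration `c^∞ = c^ω ; ⊤` -/
def inft (c : C) : C := A.seq (A.omega c) ⊤

/-- finite powers: `c^0 = nil`, `c^(i+1) = c ; c^i` -/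
def pow (c : C) : ℕ → C
  | 0 => A.nil
  | n + 1 => A.seq c (pow c n)

end CRA

theorem atomic_iteration_conjunction {C : Type*} [CompleteDistribLattice C] (A : CRA C)
    (hconj : ∀ (c : C) (S : Set C), S.Nonempty → A.seq c (sInf S) = ⨅ d ∈ S, A.seq c d)
    (hinfconj : ∀ a b, A.Atomic a → A.Atomic b →
      A.conj (A.inft a) (A.inft b) = A.inft (A.conj a b))
    (a b : C) (ha : A.Atomic a) (hb : A.Atomic b) :
    A.conj (A.omega a) (A.omega b) = A.omega (A.conj a b) := by
  classical
  -- conj distributes over binary meets in its right argument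
  have hpair : ∀ c x y : C, A.conj c (x ⊓ y) = A.conj c x ⊓ A.conj c y := by
    intro c x y
    have h := A.conj_sInf_distrib c {x, y} ⟨x, by simp⟩
    rw [sInf_pair] at h
    rw [h, iInf_pair]
  -- conj is monotone in its right argument
  have hmono : ∀ c : C, Monotone (A.conj c) := by
    intro c x y hxy
    have h := hpair c x y
    rw [inf_eq_left.mpr hxy] at h
    rw [h]; exact inf_le_right
  -- the order homs defining the omega iterations
  set Fa : C →o C := ⟨fun x => A.nil ⊓ A.seq a x,
    fun _ _ h => inf_le_inf_left _ (A.seq_mono_right a h)⟩ with hFa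
  set Fb : C →o C := ⟨fun x => A.nil ⊓ A.seq b x,
    fun _ _ h => inf_le_inf_left _ (A.seq_mono_right b h)⟩ with hFb
  set Fc : C →o C := ⟨fun x => A.nil ⊓ A.seq (A.conj a b) x,
    fun _ _ h => inf_le_inf_left _ (A.seq_mono_right (A.conj a b) h)⟩ with hFc
  have hωa : A.omega a = OrderHom.lfp Fa := rfl
  have hωb : A.omega b = OrderHom.lfp Fb := rfl
  have hωc : A.omega (A.conj a b) = OrderHom.lfp Fc := rfl
  -- unfoldings
  have ua : A.nil ⊓ A.seq a (A.omega a) = A.omega a := OrderHom.map_lfp Fa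
  have ub : A.nil ⊓ A.seq b (A.omega b) = A.omega b := OrderHom.map_lfp Fb
  -- a^ω ⋓ b^ω is a fixed point of Fc
  have hfix : A.nil ⊓ A.seq (A.conj a b) (A.conj (A.omega a) (A.omega b))
      = A.conj (A.omega a) (A.omega b) := by
    conv_rhs => rw [← ua, ← ub]
    rw [hpair]
    -- compute conj (nil ⊓ a;ωa) nil
    have h1 : A.conj (A.nil ⊓ A.seq a (A.omega a)) A.nil = A.nil := by
      rw [A.conj_comm, hpair, A.conj_idem, A.conj_comm A.nil,
        A.conj_atomic_seq_nil a (A.omega a) ha, inf_top_eq]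
    -- compute conj (nil ⊓ a;ωa) (b;ωb)
    have h2 : A.conj (A.nil ⊓ A.seq a (A.omega a)) (A.seq b (A.omega b))
        = A.seq (A.conj a b) (A.conj (A.omega a) (A.omega b)) := by
      rw [A.conj_comm, hpair, A.conj_atomic_seq_nil b (A.omega b) hb,
        A.conj_interchange b a (A.omega b) (A.omega a) hb ha,
        A.conj_comm b a, A.conj_comm (A.omega b) (A.omega a), top_inf_eq]
    rw [h1, h2]
  -- direction 1: omega (a ⋓ b) ≤ a^ω ⋓ b^ω
  have hle1 : A.omega (A.conj a b) ≤ A.conj (A.omega a) (A.omega b) := by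
    rw [hωc]
    exact OrderHom.lfp_le Fc (le_of_eq hfix)
  -- a ≤ a ⋓ b  and  b ≤ a ⋓ b
  have hab : A.conj a b = a ⊔ b := A.conj_atomic a b ha hb
  have ha' : a ≤ A.conj a b := by rw [hab]; exact le_sup_left
  have hb' : b ≤ A.conj a b := by rw [hab]; exact le_sup_right
  -- omega is monotone: a^ω ≤ (a⋓b)^ω and b^ω ≤ (a⋓b)^ω
  have hωa' : A.omega a ≤ A.omega (A.conj a b) := by
    rw [hωa, hωc]
    apply OrderHom.lfp_le Fa
    calc Fa (OrderHom.lfp Fc) = A.nil ⊓ A.seq a (OrderHom.lfp Fc) := rfl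
      _ ≤ A.nil ⊓ A.seq (A.conj a b) (OrderHom.lfp Fc) :=
          inf_le_inf_left _ (A.seq_mono_left _ ha')
      _ = Fc (OrderHom.lfp Fc) := rfl
      _ = OrderHom.lfp Fc := OrderHom.map_lfp Fc
  have hωb' : A.omega b ≤ A.omega (A.conj a b) := by
    rw [hωb, hωc]
    apply OrderHom.lfp_le Fb
    calc Fb (OrderHom.lfp Fc) = A.nil ⊓ A.seq b (OrderHom.lfp Fc) := rfl
      _ ≤ A.nil ⊓ A.seq (A.conj a b) (OrderHom.lfp Fc) :=
          inf_le_inf_left _ (A.seq_mono_left _ hb')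
      _ = Fc (OrderHom.lfp Fc) := rfl
      _ = OrderHom.lfp Fc := OrderHom.map_lfp Fc
  -- direction 2
  have hle2 : A.conj (A.omega a) (A.omega b) ≤ A.omega (A.conj a b) := by
    calc A.conj (A.omega a) (A.omega b)
        ≤ A.conj (A.omega a) (A.omega (A.conj a b)) := hmono _ hωb'
      _ = A.conj (A.omega (A.conj a b)) (A.omega a) := A.conj_comm _ _
      _ ≤ A.conj (A.omega (A.conj a b)) (A.omega (A.conj a b)) := hmono _ hωa'
      _ = A.omega (A.conj a b) := A.conj_idem _
  exact le_antisymm hle2 hle1
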